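/- Let F be a free group freely generated by a set X, let r be a positive integer, and let a, b, c ∈ F be elements of word length exactly r with a⁻¹b = c⁻¹a. Then a = b = c. -/

import Mathlib

namespace Stmt11Aux

open FreeGroup List

variable {α : Type*} [DecidableEq α]

/-- A word is reduced if no adjacent pair cancels. -/
def Reduced (L : List (α × Bool)) : Prop :=
  List.Chain' (fun p q : α × Bool => ¬(p.1 = q.1 ∧ p.2 = !q.2)) L

lemma Reduced.reduce_eq {L : List (α × Bool)} (h : Reduced L) : FreeGroup.reduce L = L := by
  induction L with
  | nil => rfl
  | cons x L ih =>
    have hL : Reduced L := h.tail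
    rw [FreeGroup.reduce.cons, ih hL]
    cases L with
    | nil => rfl
    | cons y t =>
      have hxy : ¬(x.1 = y.1 ∧ x.2 = !y.2) := (List.isChain_cons_cons.1 h).1
      simp only [hxy, if_false]

lemma not_reduced_decomp :
    ∀ {L : List (α × Bool)}, ¬ Reduced L →
      ∃ (P : List (α × Bool)) (x : α) (b : Bool) (Q : List (α × Bool)),
        L = P ++ (x, b) :: (x, !b) :: Q := by
  intro L
  induction L with
  | nil => intro h; exact absurd List.isChain_nil h
  | cons p L ih =>
    intro h
    cases L with
    | nil => exact absurd (List.isChain_singleton p) h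
    | cons q t =>
      rw [Reduced, List.Chain', List.isChain_cons_cons] at h
      by_cases hpq : p.1 = q.1 ∧ p.2 = !q.2
      · refine ⟨[], p.1, p.2, t, ?_⟩
        obtain ⟨h1, h2⟩ := hpq
        simp only [List.nil_append]
        have : q = (p.1, !p.2) := by
          cases q; cases p
          simp_all
        rw [this]
      · have hch : ¬ Reduced (q :: t) := fun hc => h ⟨hpq, hc⟩
        obtain ⟨P, x, b, Q, hPQ⟩ := ih hch
        exact ⟨p :: P, x, b, Q, by rw [List.cons_append, hPQ]⟩

lemma reduced_reduce (L : List (α × Bool)) : Reduced (FreeGroup.reduce L) := by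
  by_contra hc
  obtain ⟨P, x, b, Q, hPQ⟩ := not_reduced_decomp hc
  exact FreeGroup.reduce.not hPQ

lemma reduced_toWord (x : FreeGroup α) : Reduced x.toWord := by
  rw [← FreeGroup.reduce_toWord]
  exact reduced_reduce _

lemma invRev_append (L M : List (α × Bool)) :
    FreeGroup.invRev (L ++ M) = FreeGroup.invRev M ++ FreeGroup.invRev L := by
  simp [FreeGroup.invRev]

lemma invRev_singleton (x : α × Bool) :
    FreeGroup.invRev [x] = [(x.1, !x.2)] := rfl

/-- Cancellation lemma: multiplying two reduced words, a suffix of the first cancels against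
the matching prefix of the second, and the rest concatenates without cancellation. -/
lemma cancel :
    ∀ L M : List (α × Bool), Reduced L → Reduced M →
      ∃ L₁ T M₁, L = L₁ ++ T ∧ M = FreeGroup.invRev T ++ M₁ ∧
        FreeGroup.reduce (L ++ M) = L₁ ++ M₁ := by
  intro L
  induction L using List.reverseRecOn with
  | nil =>
    intro M _ hM
    exact ⟨[], [], M, rfl, by simp [FreeGroup.invRev], by simpa using hM.reduce_eq⟩
  | append_singleton L' x ih =>
    intro M hL hM
    cases M with
    | nil =>
      refine ⟨L' ++ [x], [], [], by simp, by simp [FreeGroup.invRev], ?_⟩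
      simpa using hL.reduce_eq
    | cons y M' =>
      by_cases hxy : x.1 = y.1 ∧ y.2 = !x.2
      · -- cancellation at the junction
        have hy : y = (x.1, !x.2) := by
          cases x; cases y; simp_all
        have hstep : FreeGroup.Red.Step ((L' ++ [x]) ++ y :: M') (L' ++ M') := by
          have : (L' ++ [x]) ++ y :: M' = L' ++ (x.1, x.2) :: (x.1, !x.2) :: M' := by
            rw [hy]; simp
          rw [this]
          exact FreeGroup.Red.Step.not
        have hred : FreeGroup.reduce ((L' ++ [x]) ++ y :: M')
            = FreeGroup.reduce (L' ++ M') := FreeGroup.reduce.Step.eq hstep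
        have hL' : Reduced L' := hL.prefix ⟨[x], rfl⟩
        have hM' : Reduced M' := hM.tail
        obtain ⟨L₁, T', M₁, h1, h2, h3⟩ := ih M' hL' hM'
        refine ⟨L₁, T' ++ [x], M₁, by rw [h1, List.append_assoc], ?_, by rw [hred, h3]⟩
        rw [invRev_append, invRev_singleton]
        rw [hy, h2]
        simp
      · -- no cancellation: the concatenation is already reduced
        have hred : Reduced ((L' ++ [x]) ++ y :: M') := by
          rw [Reduced, List.Chain', List.isChain_append]
          refine ⟨hL, hM, ?_⟩
          intro p hp q hq
          simp at hp hq
          subst hp; subst hq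
          rintro ⟨h1, h2⟩
          exact hxy ⟨h1, by simp [h2]⟩
        exact ⟨L' ++ [x], [], y :: M', by simp, by simp [FreeGroup.invRev], hred.reduce_eq⟩

/-- Key lemma: if `norm (x * d) = norm x` and `norm (x * d⁻¹) = norm x` then `d = 1`. -/
lemma key {x d : FreeGroup α} (h1 : (x * d).norm = x.norm)
    (h2 : (x * d⁻¹).norm = x.norm) : d = 1 := by
  set A := x.toWord with hA
  set D := d.toWord with hD
  have hxd : (x * d).toWord = FreeGroup.reduce (A ++ D) := by
    conv_lhs => rw [← FreeGroup.mk_toWord (x := x), ← FreeGroup.mk_toWord (x := d)]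
    rw [FreeGroup.mul_mk]
    rfl
  have hxd' : (x * d⁻¹).toWord = FreeGroup.reduce (A ++ FreeGroup.invRev D) := by
    conv_lhs => rw [← FreeGroup.mk_toWord (x := x), ← FreeGroup.mk_toWord (x := d⁻¹)]
    rw [FreeGroup.mul_mk]
    rw [FreeGroup.toWord_inv]
    exact FreeGroup.toWord_mk
  obtain ⟨L₁, T, M₁, e1, e2, e3⟩ := cancel A D (reduced_toWord x) (reduced_toWord d)
  obtain ⟨L₂, S, M₂, f1, f2, f3⟩ := cancel A (FreeGroup.invRev D) (reduced_toWord x)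
    (by rw [← FreeGroup.toWord_inv]; exact reduced_toWord d⁻¹)
  have hn1 : L₁.length + M₁.length = A.length := by
    have := h1
    rw [FreeGroup.norm, FreeGroup.norm, hxd, e3] at this
    simpa using this
  have hn2 : L₂.length + M₂.length = A.length := by
    have := h2
    rw [FreeGroup.norm, FreeGroup.norm, hxd'] at this
    rw [f3] at this
    simpa using this
  have hAlen1 : A.length = L₁.length + T.length := by rw [e1]; simp
  have hAlen2 : A.length = L₂.length + S.length := by rw [f1]; simp
  have hM₁ : M₁.length = T.length := by omega
  have hM₂ : M₂.length = S.length := by omega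
  -- invRev D = invRev M₁ ++ T  and  invRev D = invRev S ++ M₂
  have hDrev : FreeGroup.invRev D = FreeGroup.invRev M₁ ++ T := by
    rw [e2, invRev_append, FreeGroup.invRev_invRev]
  have hST : T.length = S.length := by
    have hl := congrArg List.length (hDrev.symm.trans f2)
    simp at hl
    omega
  have hTS : T = S := by
    have : L₁ ++ T = L₂ ++ S := by rw [← e1, ← f1]
    have hlen : T.length = S.length := hST
    exact (List.append_inj_right' this (by omega)).symm ▸
      (List.append_inj' this (by omega)).2
  have hsplit : FreeGroup.invRev M₁ = FreeGroup.invRev S ∧ T = M₂ := by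
    have heq : FreeGroup.invRev M₁ ++ T = FreeGroup.invRev S ++ M₂ := by
      rw [← hDrev, f2]
    exact List.append_inj' heq (by simp [hM₁, hM₂, hST])
  have hM₁S : M₁ = S := FreeGroup.invRev_injective hsplit.1
  -- D = invRev T ++ T
  have hDD : D = FreeGroup.invRev T ++ T := by
    rw [e2, hM₁S, ← hTS]
  -- T must be empty since D is reduced
  have hTnil : T = [] := by
    by_contra hT
    obtain ⟨g, t, rfl⟩ := List.exists_cons_of_ne_nil hT
    have hDred : Reduced D := reduced_toWord d
    rw [hDD] at hDred
    have : FreeGroup.invRev (g :: t) = FreeGroup.invRev t ++ [(g.1, !g.2)] := by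
      show FreeGroup.invRev ([g] ++ t) = _
      rw [invRev_append, invRev_singleton]
    rw [this, List.append_assoc] at hDred
    have hsuf := hDred.suffix ⟨FreeGroup.invRev t, rfl⟩
    have h6 : List.Chain' (fun p q : α × Bool => ¬(p.1 = q.1 ∧ p.2 = !q.2))
        ((g.1, !g.2) :: g :: t) := by
      simpa [List.singleton_append] using hsuf
    exact (List.isChain_cons_cons.1 h6).1 ⟨rfl, rfl⟩
  have : D = [] := by rw [hDD, hTnil]; simp [FreeGroup.invRev]
  exact FreeGroup.toWord_eq_nil_iff.1 this

end Stmt11Aux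

theorem stmt11 (α : Type*) [DecidableEq α] (r : ℕ) (hr : 0 < r)
    (a b c : FreeGroup α) (ha : a.norm = r) (hb : b.norm = r) (hc : c.norm = r)
    (h : a⁻¹ * b = c⁻¹ * a) : a = b ∧ b = c := by
  set d := a⁻¹ * b with hd
  have hb' : b = a * d := (mul_inv_cancel_left a b).symm
  have hc' : c = a * d⁻¹ := by
    have hh : d = c⁻¹ * a := h
    rw [hh, mul_inv_rev, inv_inv, mul_inv_cancel_left]
  have hdone : d = 1 := by
    apply Stmt11Aux.key (x := a)
    · rw [← hb', hb, ha]
    · rw [← hc', hc, ha]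
  constructor
  · rw [hb', hdone, mul_one]
  · rw [hb', hc', hdone]; simp
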